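/- Let ℓ ≥ 2, ρ ∈ (0,1), and d ∈ (0,1). Consider the set F of real symmetric ℓ×ℓ matrices D with 0 ≺ D ⪯ Σ^{(ℓ)} and (1/ℓ)·tr(D) ≤ d. Then the minimum over D ∈ F of (1/2)·log(det(Σ^{(ℓ)})/det(D)) is attained and equals: (1/2)·log((1−ρ)^{ℓ−1}(1+(ℓ−1)ρ)/d^ℓ) if d ∈ (0, 1−ρ), and (1/2)·log((1+(ℓ−1)ρ)/(ℓd−(ℓ−1)(1−ρ))) if d ∈ [1−ρ, 1). -/

import Mathlib

open Matrix Finset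

namespace Stmt4Aux

noncomputable section

variable {n : ℕ}

/-- all-ones matrix -/
def Jm (n : ℕ) : Matrix (Fin n) (Fin n) ℝ := Matrix.of fun _ _ => 1

/-- `a•I + b•J` -/
def Mm (n : ℕ) (a b : ℝ) : Matrix (Fin n) (Fin n) ℝ :=
  a • (1 : Matrix (Fin n) (Fin n) ℝ) + b • Jm n

lemma Jm_mul_Jm : Jm n * Jm n = (n : ℝ) • Jm n := by
  ext i j; simp [Jm, Matrix.mul_apply]

lemma Jm_mulVec (x : Fin n → ℝ) : Jm n *ᵥ x = fun _ => ∑ j, x j := by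
  ext i; simp [Jm, Matrix.mulVec, dotProduct]

lemma trace_Jm : (Jm n).trace = (n : ℝ) := by
  simp [Matrix.trace, Jm, Matrix.diag]

lemma conjTranspose_Jm : (Jm n)ᴴ = Jm n := by
  ext i j; simp [Jm]

lemma transpose_Jm : (Jm n)ᵀ = Jm n := by
  ext i j; simp [Jm]

lemma Mm_herm (a b : ℝ) : (Mm n a b).IsHermitian := by
  unfold Matrix.IsHermitian Mm
  rw [conjTranspose_add, conjTranspose_smul, conjTranspose_smul, conjTranspose_one,
    conjTranspose_Jm, star_trivial, star_trivial]

lemma Mm_symm (a b : ℝ) : (Mm n a b).IsSymm := by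
  unfold Matrix.IsSymm Mm
  rw [transpose_add, transpose_smul, transpose_smul, transpose_one, transpose_Jm]

lemma Mm_mul_Mm (a b c e : ℝ) :
    Mm n a b * Mm n c e = Mm n (a * c) (a * e + b * c + n * b * e) := by
  unfold Mm
  simp only [Matrix.add_mul, Matrix.mul_add, Matrix.smul_mul, Matrix.mul_smul,
    Matrix.one_mul, Matrix.mul_one, Jm_mul_Jm, smul_smul]
  module

lemma Mm_mulVec (a b : ℝ) (x : Fin n → ℝ) :
    Mm n a b *ᵥ x = a • x + b • (fun _ => ∑ j, x j) := by
  unfold Mm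
  rw [Matrix.add_mulVec, Matrix.smul_mulVec, Matrix.smul_mulVec,
    Matrix.one_mulVec, Jm_mulVec]

lemma Mm_quad (a b : ℝ) (x : Fin n → ℝ) :
    x ⬝ᵥ (Mm n a b *ᵥ x) = a * (∑ i, x i ^ 2) + b * (∑ i, x i) ^ 2 := by
  rw [Mm_mulVec]
  have h1 : x ⬝ᵥ (a • x) = a * ∑ i, x i ^ 2 := by
    simp [dotProduct, Finset.mul_sum, sq, mul_comm, mul_left_comm]
  have h2 : (x ⬝ᵥ (b • fun _ => ∑ j, x j)) = b * (∑ i, x i) ^ 2 := by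
    simp only [dotProduct, Pi.smul_apply, smul_eq_mul]
    rw [← Finset.sum_mul]
    ring
  rw [dotProduct_add, h1, h2]

lemma Mm_posSemidef {a b : ℝ} (ha : 0 ≤ a) (hb : 0 ≤ b) : (Mm n a b).PosSemidef := by
  refine .of_dotProduct_mulVec_nonneg (Mm_herm a b) fun x => ?_
  rw [star_trivial, Mm_quad]
  positivity

lemma Mm_posDef {a b : ℝ} (ha : 0 < a) (hb : 0 ≤ b) : (Mm n a b).PosDef := by
  refine .of_dotProduct_mulVec_pos (Mm_herm a b) fun x hx => ?_
  rw [star_trivial, Mm_quad]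
  have h1 : 0 < ∑ i, x i ^ 2 := by
    obtain ⟨i, hi⟩ := Function.ne_iff.mp hx
    exact Finset.sum_pos' (fun j _ => sq_nonneg _)
      ⟨i, Finset.mem_univ i, pow_two_pos_of_ne_zero hi⟩
  nlinarith [sq_nonneg (∑ i, x i)]

lemma Mm_trace (a b : ℝ) : (Mm n a b).trace = n * (a + b) := by
  unfold Mm
  rw [Matrix.trace_add, Matrix.trace_smul, Matrix.trace_smul, Matrix.trace_one, trace_Jm]
  simp [Fintype.card_fin]
  ring

lemma Mm_det {a : ℝ} (hn : 1 ≤ n) (ha : a ≠ 0) (b : ℝ) :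
    (Mm n a b).det = a ^ (n - 1) * (a + n * b) := by
  have h1 : Mm n a b = a • ((1 : Matrix (Fin n) (Fin n) ℝ) +
      Matrix.replicateCol Unit (fun _ : Fin n => b / a) * Matrix.replicateRow Unit (fun _ : Fin n => (1 : ℝ))) := by
    ext i j
    simp only [Mm, Jm, Matrix.add_apply, Matrix.smul_apply, Matrix.one_apply, Matrix.of_apply,
      smul_eq_mul, Matrix.mul_apply, Matrix.replicateCol_apply, Matrix.replicateRow_apply]
    simp only [Finset.univ_unique, Finset.sum_singleton, mul_one]
    split_ifs <;> field_simp
  rw [h1, Matrix.det_smul, Matrix.det_one_add_replicateCol_mul_replicateRow]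
  have h2 : ((fun _ : Fin n => (1:ℝ)) ⬝ᵥ fun _ : Fin n => b / a) = n * (b / a) := by
    simp [dotProduct]
  rw [h2]
  have h3 : a ^ (Fintype.card (Fin n)) = a ^ (n - 1) * a := by
    rw [← pow_succ, Fintype.card_fin]
    congr 1; omega
  rw [h3]
  field_simp

lemma trace_eq_sum_eigen {A : Matrix (Fin n) (Fin n) ℝ} (hA : A.IsHermitian) :
    A.trace = ∑ i, hA.eigenvalues i := by
  conv_lhs => rw [hA.spectral_theorem, Unitary.conjStarAlgAut_apply]
  rw [Matrix.trace_mul_cycle]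
  rw [show (star (hA.eigenvectorUnitary : Matrix (Fin n) (Fin n) ℝ)) *
      (hA.eigenvectorUnitary : Matrix (Fin n) (Fin n) ℝ) = 1 from
    Matrix.mem_unitaryGroup_iff'.mp hA.eigenvectorUnitary.2, Matrix.one_mul,
    Matrix.trace_diagonal]
  simp

lemma det_le_exp_trace {B : Matrix (Fin n) (Fin n) ℝ} (hB : B.PosSemidef) :
    B.det ≤ Real.exp (B.trace - n) := by
  have he := hB.1.det_eq_prod_eigenvalues
  have ht := trace_eq_sum_eigen hB.1
  rw [he, ht]
  calc (∏ i, hB.1.eigenvalues i) ≤ ∏ i, Real.exp (hB.1.eigenvalues i - 1) := by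
        refine Finset.prod_le_prod (fun i _ => hB.eigenvalues_nonneg i) (fun i _ => ?_)
        have := Real.add_one_le_exp (hB.1.eigenvalues i - 1)
        linarith
    _ = Real.exp (∑ i, (hB.1.eigenvalues i - 1)) := by rw [Real.exp_sum]
    _ = Real.exp ((∑ i, hB.1.eigenvalues i) - n) := by
        rw [Finset.sum_sub_distrib]
        simp [Fintype.card_fin]

lemma psd_trace_nonneg {A : Matrix (Fin n) (Fin n) ℝ} (hA : A.PosSemidef) :
    0 ≤ A.trace := by
  rw [Matrix.trace]
  refine Finset.sum_nonneg fun i _ => ?_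
  have := hA.dotProduct_mulVec_nonneg (Pi.single i 1)
  simpa [dotProduct, Matrix.mulVec, Pi.single_apply, Matrix.diag] using this

open scoped MatrixOrder in
lemma trace_mul_psd_nonneg {A B : Matrix (Fin n) (Fin n) ℝ}
    (hA : A.PosSemidef) (hB : B.PosSemidef) : 0 ≤ (A * B).trace := by
  have h1 : (A * B).trace = (CFC.sqrt A * B * CFC.sqrt A).trace := by
    conv_rhs => rw [Matrix.trace_mul_cycle]
    rw [CFC.sqrt_mul_sqrt_self A hA.nonneg]
  rw [h1]
  refine psd_trace_nonneg ?_
  have h2 := hB.conjTranspose_mul_mul_same (CFC.sqrt A)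
  rwa [(CFC.sqrt_nonneg A).posSemidef.1.eq] at h2

lemma Mm_mul_left_trace (a b : ℝ) (D : Matrix (Fin n) (Fin n) ℝ) :
    (Mm n a b * D).trace = a * D.trace + b * (Jm n * D).trace := by
  unfold Mm
  rw [Matrix.add_mul, Matrix.smul_mul, Matrix.smul_mul, Matrix.trace_add,
    Matrix.trace_smul, Matrix.trace_smul, Matrix.one_mul]
  simp

end

end Stmt4Aux

open Matrix Finset Stmt4Aux




/-- explicit value of the centralized Gaussian rate-distortion function
for positive correlation (Proposition 1, second case): the minimum of
`(1/2)·log(det Σ / det D)` over symmetric `D` with `0 ≺ D ⪯ Σ^(ℓ)` and `(1/ℓ)·tr D ≤ d`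
is attained and equals the stated piecewise expression. -/
theorem stmt_4 (ℓ : ℕ) (hℓ : 2 ≤ ℓ) (ρ d : ℝ)
    (hρ₁ : 0 < ρ) (hρ₂ : ρ < 1) (hd₁ : 0 < d) (hd₂ : d < 1)
    (S : Matrix (Fin ℓ) (Fin ℓ) ℝ)
    (hS : S = Matrix.of fun i j => if i = j then (1 : ℝ) else ρ) :
    IsLeast
      ((fun D : Matrix (Fin ℓ) (Fin ℓ) ℝ => (1 / 2) * Real.log (S.det / D.det)) ''
        {D | D.IsSymm ∧ D.PosDef ∧ (S - D).PosSemidef ∧ (1 / (ℓ : ℝ)) * D.trace ≤ d})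
      (if d < 1 - ρ then
        (1 / 2) * Real.log ((1 - ρ) ^ (ℓ - 1) * (1 + ((ℓ : ℝ) - 1) * ρ) / d ^ ℓ)
      else
        (1 / 2) *
          Real.log ((1 + ((ℓ : ℝ) - 1) * ρ) / ((ℓ : ℝ) * d - ((ℓ : ℝ) - 1) * (1 - ρ)))) := by
  classical
  have hn1 : 1 ≤ ℓ := by omega
  have hL2 : (2:ℝ) ≤ (ℓ:ℝ) := by exact_mod_cast hℓ
  have hL0 : (0:ℝ) < (ℓ:ℝ) := by linarith
  have hρ' : (0:ℝ) < 1 - ρ := by linarith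
  have hS' : S = Mm ℓ (1 - ρ) ρ := by
    rw [hS]; ext i j
    simp only [Mm, Jm, Matrix.add_apply, Matrix.smul_apply, Matrix.of_apply,
      Matrix.one_apply, smul_eq_mul]
    split_ifs <;> ring
  have hlampos : 0 < 1 + ((ℓ:ℝ) - 1) * ρ := by nlinarith
  have hdetS : S.det = (1 - ρ) ^ (ℓ - 1) * (1 + ((ℓ:ℝ) - 1) * ρ) := by
    rw [hS', Mm_det hn1 (ne_of_gt hρ') ρ]
    congr 1; ring
  have hpowpos : 0 < (1 - ρ) ^ (ℓ - 1) := pow_pos hρ' _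
  have hdetSpos : 0 < S.det := by rw [hdetS]; positivity
  constructor
  · -- membership : the minimum is attained
    by_cases hc : d < 1 - ρ
    · refine ⟨Mm ℓ d 0, ⟨Mm_symm d 0, Mm_posDef hd₁ le_rfl, ?_, ?_⟩, ?_⟩
      · have h : S - Mm ℓ d 0 = Mm ℓ (1 - ρ - d) ρ := by
          rw [hS']; unfold Mm; module
        rw [h]; exact Mm_posSemidef (by linarith) hρ₁.le
      · have htr1 : (1:ℝ) / (ℓ:ℝ) * ((ℓ:ℝ) * (d + 0)) = d := by field_simp; ring
        rw [Mm_trace, htr1]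
      · rw [if_pos hc]
        simp only
        have hdet1 : (Mm ℓ d 0).det = d ^ ℓ := by
          rw [Mm_det hn1 (ne_of_gt hd₁) 0, mul_zero, add_zero, ← pow_succ]
          congr 1; omega
        rw [hdet1, hdetS]
    · have hb2 : 0 ≤ d - (1 - ρ) := by linarith [not_lt.mp hc]
      refine ⟨Mm ℓ (1 - ρ) (d - (1 - ρ)), ⟨Mm_symm _ _, Mm_posDef hρ' hb2, ?_, ?_⟩, ?_⟩
      · have h : S - Mm ℓ (1 - ρ) (d - (1 - ρ)) = Mm ℓ 0 (1 - d) := by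
          rw [hS']; unfold Mm; module
        rw [h]; exact Mm_posSemidef le_rfl (by linarith)
      · have htr2 : (1:ℝ) / (ℓ:ℝ) * ((ℓ:ℝ) * ((1 - ρ) + (d - (1 - ρ)))) = d := by
          field_simp; ring
        rw [Mm_trace, htr2]
      · rw [if_neg hc]
        simp only
        have hdet2 : (Mm ℓ (1 - ρ) (d - (1 - ρ))).det
            = (1 - ρ) ^ (ℓ - 1) * ((ℓ:ℝ) * d - ((ℓ:ℝ) - 1) * (1 - ρ)) := by
          rw [Mm_det hn1 (ne_of_gt hρ') _]
          congr 1; ring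
        rw [hdet2, hdetS, mul_div_mul_left _ _ (ne_of_gt hpowpos)]
  · -- lower bound
    rintro y ⟨D, ⟨hsym, hpd, hpsd, htr⟩, rfl⟩
    simp only
    have hDdet : 0 < D.det := hpd.det_pos
    have hT1 : D.trace ≤ (ℓ:ℝ) * d := by
      have h := mul_le_mul_of_nonneg_left htr hL0.le
      rw [show (ℓ:ℝ) * (1 / (ℓ:ℝ) * D.trace) = D.trace from by field_simp] at h
      linarith
    have mono : ∀ K : ℝ, 0 < K → D.det ≤ K →
        (1/2) * Real.log (S.det / K) ≤ (1/2) * Real.log (S.det / D.det) := by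
      intro K hK hDK
      have h1 : S.det / K ≤ S.det / D.det := by gcongr
      have h2 := Real.log_le_log (by positivity) h1
      linarith
    by_cases hc : d < 1 - ρ
    · rw [if_pos hc]
      rw [← hdetS]
      refine mono (d ^ ℓ) (pow_pos hd₁ ℓ) ?_
      have hBpsd : (d⁻¹ • D).PosSemidef := by
        refine .of_dotProduct_mulVec_nonneg ?_ fun x => ?_
        · show (d⁻¹ • D)ᴴ = d⁻¹ • D
          rw [Matrix.conjTranspose_smul, hpd.1.eq, star_trivial]
        · rw [Matrix.smul_mulVec, dotProduct_smul]
          exact smul_nonneg (by positivity) (hpd.posSemidef.dotProduct_mulVec_nonneg x)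
      have hdet := det_le_exp_trace hBpsd
      have htrB : (d⁻¹ • D).trace - (ℓ:ℝ) ≤ 0 := by
        rw [Matrix.trace_smul, smul_eq_mul]
        have h := mul_le_mul_of_nonneg_left hT1 (inv_nonneg.mpr hd₁.le)
        have h2 : d⁻¹ * ((ℓ:ℝ) * d) = (ℓ:ℝ) := by field_simp
        linarith
      have h1 : (d⁻¹ • D).det ≤ 1 := by
        refine le_trans hdet ?_
        rw [← Real.exp_zero]
        exact Real.exp_le_exp.mpr htrB
      rw [Matrix.det_smul, Fintype.card_fin] at h1
      have h4 := mul_le_mul_of_nonneg_left h1 (le_of_lt (pow_pos hd₁ ℓ))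
      have hdd : d ^ ℓ * (d⁻¹ ^ ℓ * D.det) = D.det := by
        rw [← mul_assoc, ← mul_pow, mul_inv_cancel₀ (ne_of_gt hd₁), one_pow, one_mul]
      rw [hdd, mul_one] at h4
      exact h4
    · rw [if_neg hc]
      have hd1ρ : 1 - ρ ≤ d := not_lt.mp hc
      have hα0 : 0 < (ℓ:ℝ) * d - ((ℓ:ℝ) - 1) * (1 - ρ) := by nlinarith
      have heq : (1 + ((ℓ:ℝ) - 1) * ρ) / ((ℓ:ℝ) * d - ((ℓ:ℝ) - 1) * (1 - ρ)) =
          S.det / ((1 - ρ) ^ (ℓ - 1) * ((ℓ:ℝ) * d - ((ℓ:ℝ) - 1) * (1 - ρ))) := by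
        rw [hdetS, mul_div_mul_left _ _ (ne_of_gt hpowpos)]
      rw [heq]
      refine mono _ (by positivity) ?_
      -- notation
      have hα1 : 1 - ρ ≤ (ℓ:ℝ) * d - ((ℓ:ℝ) - 1) * (1 - ρ) := by nlinarith
      set α : ℝ := (ℓ:ℝ) * d - ((ℓ:ℝ) - 1) * (1 - ρ) with hαdef
      set s : ℝ := (Real.sqrt (1 - ρ))⁻¹ with hsdef
      set w : ℝ := (Real.sqrt α)⁻¹ with hwdef
      have hs2 : s * s = (1 - ρ)⁻¹ := by
        rw [hsdef, ← mul_inv, Real.mul_self_sqrt hρ'.le]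
      have hw2 : w * w = α⁻¹ := by
        rw [hwdef, ← mul_inv, Real.mul_self_sqrt hα0.le]
      set t : ℝ := (w - s) / (ℓ:ℝ) with htdef
      have hRR : Mm ℓ s t * Mm ℓ s t = Mm ℓ ((1 - ρ)⁻¹) ((α⁻¹ - (1 - ρ)⁻¹) / (ℓ:ℝ)) := by
        rw [Mm_mul_Mm]
        rw [← hs2, ← hw2]
        rw [htdef]
        field_simp
        ring
      have hBpsd : (Mm ℓ s t * D * Mm ℓ s t).PosSemidef := by
        have h := hpd.posSemidef.conjTranspose_mul_mul_same (Mm ℓ s t)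
        rwa [(Mm_herm s t).eq] at h
      -- the trace bound
      have hPpsd : (Mm ℓ 1 (-(1 / (ℓ:ℝ)))).PosSemidef := by
        refine .of_dotProduct_mulVec_nonneg (Mm_herm _ _) fun x => ?_
        rw [star_trivial, Mm_quad]
        have hcs := sq_sum_le_card_mul_sum_sq (s := (Finset.univ : Finset (Fin ℓ))) (f := x)
        rw [Finset.card_univ, Fintype.card_fin] at hcs
        have hcs' : ((∑ i, x i) ^ 2 : ℝ) ≤ (ℓ:ℝ) * ∑ i, x i ^ 2 := by exact_mod_cast hcs
        have h3 : (1 / (ℓ:ℝ)) * (∑ i, x i) ^ 2 ≤ (1 / (ℓ:ℝ)) * ((ℓ:ℝ) * ∑ i, x i ^ 2) :=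
          mul_le_mul_of_nonneg_left hcs' (by positivity)
        have h4 : (1 / (ℓ:ℝ)) * ((ℓ:ℝ) * ∑ i, x i ^ 2) = ∑ i, x i ^ 2 := by field_simp
        rw [h4] at h3
        linarith
      have h0 := trace_mul_psd_nonneg hPpsd hpsd
      have hPS : (Mm ℓ 1 (-(1 / (ℓ:ℝ))) * S).trace = ((ℓ:ℝ) - 1) * (1 - ρ) := by
        rw [hS', Mm_mul_Mm, Mm_trace]
        field_simp
        ring
      have hPD : (Mm ℓ 1 (-(1 / (ℓ:ℝ))) * D).trace
          = D.trace - (1 / (ℓ:ℝ)) * (Jm ℓ * D).trace := by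
        rw [Mm_mul_left_trace]; ring
      rw [Matrix.mul_sub, Matrix.trace_sub, hPS, hPD] at h0
      have hT12 : D.trace - (1 / (ℓ:ℝ)) * (Jm ℓ * D).trace ≤ ((ℓ:ℝ) - 1) * (1 - ρ) := by
        linarith
      have htrB : (Mm ℓ s t * D * Mm ℓ s t).trace - (ℓ:ℝ) ≤ 0 := by
        rw [Matrix.trace_mul_cycle, hRR, Mm_mul_left_trace]
        -- (1-ρ)⁻¹ * D.trace + ((α⁻¹ - (1-ρ)⁻¹)/ℓ) * (Jm ℓ * D).trace ≤ ℓ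
        have hu2 : (1 - ρ)⁻¹ * (1 - ρ) = 1 := inv_mul_cancel₀ (ne_of_gt hρ')
        have hu1 : α⁻¹ * α = 1 := inv_mul_cancel₀ (ne_of_gt hα0)
        have hu1pos : (0:ℝ) < α⁻¹ := inv_pos.mpr hα0
        have hu21 : α⁻¹ ≤ (1 - ρ)⁻¹ := by
          exact inv_anti₀ hρ' hα1
        have key : (1 - ρ)⁻¹ * D.trace + (α⁻¹ - (1 - ρ)⁻¹) / (ℓ:ℝ) * (Jm ℓ * D).trace
            = α⁻¹ * D.trace
              + ((1 - ρ)⁻¹ - α⁻¹) * (D.trace - (1 / (ℓ:ℝ)) * (Jm ℓ * D).trace) := by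
          field_simp
          ring
        rw [key]
        have e1 : α⁻¹ * D.trace ≤ α⁻¹ * ((ℓ:ℝ) * d) :=
          mul_le_mul_of_nonneg_left hT1 hu1pos.le
        have e2 : ((1 - ρ)⁻¹ - α⁻¹) * (D.trace - (1 / (ℓ:ℝ)) * (Jm ℓ * D).trace)
            ≤ ((1 - ρ)⁻¹ - α⁻¹) * (((ℓ:ℝ) - 1) * (1 - ρ)) :=
          mul_le_mul_of_nonneg_left hT12 (by linarith)
        have e3 : α⁻¹ * ((ℓ:ℝ) * d) + ((1 - ρ)⁻¹ - α⁻¹) * (((ℓ:ℝ) - 1) * (1 - ρ))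
            = (ℓ:ℝ) := by
          linear_combination hu1 + ((ℓ:ℝ) - 1) * hu2 - α⁻¹ * hαdef
        linarith
      have hdet := det_le_exp_trace hBpsd
      have h1 : (Mm ℓ s t * D * Mm ℓ s t).det ≤ 1 := by
        refine le_trans hdet ?_
        rw [← Real.exp_zero]
        exact Real.exp_le_exp.mpr htrB
      rw [Matrix.det_mul, Matrix.det_mul] at h1
      have hdetRR : (Mm ℓ s t).det * (Mm ℓ s t).det
          = ((1 - ρ)⁻¹) ^ (ℓ - 1) * α⁻¹ := by
        rw [← Matrix.det_mul, hRR, Mm_det hn1 (ne_of_gt (inv_pos.mpr hρ')) _]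
        congr 1
        rw [mul_comm ((ℓ:ℝ)), div_mul_cancel₀ _ (ne_of_gt hL0)]
        ring
      have h2 : ((1 - ρ)⁻¹) ^ (ℓ - 1) * α⁻¹ * D.det ≤ 1 := by
        calc ((1 - ρ)⁻¹) ^ (ℓ - 1) * α⁻¹ * D.det
            = (Mm ℓ s t).det * D.det * (Mm ℓ s t).det := by rw [← hdetRR]; ring
          _ ≤ 1 := h1
      have hprod : ((1 - ρ) ^ (ℓ - 1) * α) * (((1 - ρ)⁻¹) ^ (ℓ - 1) * α⁻¹) = 1 := by
        rw [mul_mul_mul_comm, ← mul_pow, mul_inv_cancel₀ (ne_of_gt hρ'),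
          one_pow, one_mul, mul_inv_cancel₀ (ne_of_gt hα0)]
      have h3 := mul_le_mul_of_nonneg_left h2 (mul_pos hpowpos hα0).le
      rw [mul_one, ← mul_assoc, hprod, one_mul] at h3
      exact h3
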